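/- Let U : Ω̄ → ℝ be lower semi-continuous on the closure of a bounded convex open set Ω ⊂ ℝⁿ, and let U** denote its convex hull (largest convex function below U). If x ∈ Ω̄ and D^{2,−}U**(x) is nonempty, then there exist points x₁,…,x_q ∈ Ω̄ with q ≤ n+1, and weights λ₁,…,λ_q ∈ (0,1] summing to 1, such that x = Σλᵢxᵢ and U**(x) = Σλᵢ U(xᵢ); moreover U** is affine on the convex hull of {x₁,…,x_q}. -/

import Mathlib

open Filter

/-- Quadratic form of a matrix. -/
def quadForm {n : ℕ} (A : Matrix (Fin n) (Fin n) ℝ) (v : EuclideanSpace ℝ (Fin n)) : ℝ :=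
  ∑ i, ∑ j, A i j * v i * v j

/-- `(p, A)` belongs to the second-order subjet `D^{2,−}u(x)` relative to the set `S`. -/
def MemSubjetWithin {n : ℕ} (S : Set (EuclideanSpace ℝ (Fin n)))
    (u : EuclideanSpace ℝ (Fin n) → ℝ) (x p : EuclideanSpace ℝ (Fin n))
    (A : Matrix (Fin n) (Fin n) ℝ) : Prop :=
  ∀ ε : ℝ, 0 < ε → ∀ᶠ y in nhdsWithin x S,
    u x + (inner ℝ p (y - x) : ℝ) + (1 / 2) * quadForm A (y - x) - ε * ‖y - x‖ ^ 2 ≤ u y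

/-- The convex envelope (biconjugate) of `U` on `S`: the supremum of all affine functions
lying below `U` on `S`. -/
noncomputable def convexEnvelope {n : ℕ} (S : Set (EuclideanSpace ℝ (Fin n)))
    (U : EuclideanSpace ℝ (Fin n) → ℝ) : EuclideanSpace ℝ (Fin n) → ℝ :=
  fun x => sSup {v | ∃ (g : EuclideanSpace ℝ (Fin n) →L[ℝ] ℝ) (b : ℝ),
    (∀ y ∈ S, g y + b ≤ U y) ∧ v = g x + b}

section helpers
open Topology

lemma lsc_sublevel_closed {X : Type*} [MetricSpace X] {f φ : X → ℝ} {s : Set X} (hs : IsClosed s)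
    (hf : LowerSemicontinuousOn f s) (hφ : Continuous φ) :
    IsClosed {y | y ∈ s ∧ f y ≤ φ y} := by
  refine IsSeqClosed.isClosed ?_
  intro u y hu hy
  have hys : y ∈ s := hs.isSeqClosed (fun k => (hu k).1) hy
  refine ⟨hys, ?_⟩
  by_contra hlt
  push_neg at hlt
  obtain ⟨c, hc1, hc2⟩ := exists_between hlt
  have h1 : ∀ᶠ z in nhdsWithin y s, c < f z := hf y hys c hc2
  have h2 : ∀ᶠ z in nhds y, φ z < c := (hφ.tendsto y).eventually_lt_const hc1
  have hty : Tendsto u atTop (nhdsWithin y s) :=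
    tendsto_nhdsWithin_of_tendsto_nhds_of_eventually_within u hy
      (Eventually.of_forall fun k => (hu k).1)
  obtain ⟨k, hk1, hk2⟩ := ((hty.eventually h1).and (hy.eventually h2)).exists
  have := (hu k).2
  linarith

lemma lsc_exists_min {X : Type*} [MetricSpace X] {f : X → ℝ} {s : Set X} (hsc : IsCompact s)
    (hscl : IsClosed s) (hne : s.Nonempty) (hf : LowerSemicontinuousOn f s) :
    ∃ y ∈ s, ∀ z ∈ s, f y ≤ f z := by
  haveI : Nonempty s := hne.to_subtype
  set Z : s → Set X := fun z => {y | y ∈ s ∧ f y ≤ f z} with hZdef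
  have hZcl : ∀ z, IsClosed (Z z) := fun z => lsc_sublevel_closed hscl hf continuous_const
  have hZne : ∀ z : s, (Z z).Nonempty := fun z => ⟨z, z.2, le_refl _⟩
  have hZcomp : ∀ z, IsCompact (Z z) := fun z => hsc.of_isClosed_subset (hZcl z) fun y hy => hy.1
  have hdir : Directed (· ⊇ ·) Z := by
    intro a b
    rcases le_total (f a) (f b) with h | h
    · exact ⟨a, subset_rfl, fun y hy => ⟨hy.1, hy.2.trans h⟩⟩
    · exact ⟨b, fun y hy => ⟨hy.1, hy.2.trans h⟩, subset_rfl⟩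
  obtain ⟨y, hy⟩ := IsCompact.nonempty_iInter_of_directed_nonempty_isCompact_isClosed
    Z hdir hZne hZcomp hZcl
  exact ⟨y, (Set.mem_iInter.1 hy ⟨hne.some, hne.some_mem⟩).1,
    fun z hz => (Set.mem_iInter.1 hy ⟨z, hz⟩).2⟩

lemma quadForm_smul {n : ℕ} (A : Matrix (Fin n) (Fin n) ℝ) (t : ℝ) (v : EuclideanSpace ℝ (Fin n)) :
    quadForm A (t • v) = t ^ 2 * quadForm A v := by
  simp only [quadForm, PiLp.smul_apply, smul_eq_mul, Finset.mul_sum]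
  exact Finset.sum_congr rfl fun i _ => Finset.sum_congr rfl fun j _ => by ring

lemma isCompact_convexHull_euclidean {n : ℕ} {Z : Set (EuclideanSpace ℝ (Fin n))}
    (hZ : IsCompact Z) : IsCompact (convexHull ℝ Z) := by
  classical
  rcases Z.eq_empty_or_nonempty with rfl | ⟨z₀, hz₀⟩
  · simpa [convexHull_empty] using isCompact_empty
  set F : (Fin (n+1) → ℝ) × (Fin (n+1) → EuclideanSpace ℝ (Fin n)) → EuclideanSpace ℝ (Fin n) :=
    fun wz => ∑ j, wz.1 j • wz.2 j with hF
  have hFcont : Continuous F := continuous_finset_sum _ fun j _ =>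
    ((continuous_apply j).comp continuous_fst).smul ((continuous_apply j).comp continuous_snd)
  have hD : IsCompact ((stdSimplex ℝ (Fin (n+1))) ×ˢ (Set.univ.pi fun _ : Fin (n+1) => Z)) :=
    IsCompact.prod (isCompact_stdSimplex (𝕜 := ℝ) (ι := Fin (n+1))) (isCompact_univ_pi fun _ => hZ)
  have himg : convexHull ℝ Z
      = F '' ((stdSimplex ℝ (Fin (n+1))) ×ˢ (Set.univ.pi fun _ : Fin (n+1) => Z)) := by
    apply Set.Subset.antisymm
    · intro x hx
      obtain ⟨ι, hι, z, w, hrange, hindep, hwpos, hwsum, hcomb⟩ :=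
        eq_pos_convex_span_of_mem_convexHull hx
      letI := hι
      have hwsum' : ∑ i, w i = 1 := hwsum
      have hcomb' : ∑ i, w i • z i = x := hcomb
      have hcard : Fintype.card ι ≤ n + 1 := by
        have h1 := hindep.card_le_finrank_succ
        have h2 := Submodule.finrank_le (vectorSpan ℝ (Set.range z))
        rw [finrank_euclideanSpace_fin] at h2
        omega
      set k := Fintype.card ι with hk
      set e : ι ≃ Fin k := Fintype.equivFin ι with he
      set ee : (Fin k ⊕ Fin (n+1-k)) ≃ Fin (n+1) :=
        finSumFinEquiv.trans (finCongr (by omega)) with hee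
      set G : (Fin k ⊕ Fin (n+1-k)) → ℝ × EuclideanSpace ℝ (Fin n) :=
        Sum.elim (fun i => (w (e.symm i), z (e.symm i))) (fun _ => (0, z₀)) with hG
      refine ⟨(fun j => (G (ee.symm j)).1, fun j => (G (ee.symm j)).2), ⟨⟨?_, ?_⟩, ?_⟩, ?_⟩
      · intro j
        rcases h : ee.symm j with i | i
        · simp only [hG, h, Sum.elim_inl]; exact (hwpos _).le
        · simp only [hG, h, Sum.elim_inr]; exact le_rfl
      · have h3 : ∑ j, (G (ee.symm j)).1 = ∑ s, (G s).1 :=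
          Equiv.sum_comp ee.symm fun s => (G s).1
        rw [h3, Fintype.sum_sum_type]
        simp only [hG, Sum.elim_inl, Sum.elim_inr]
        rw [Equiv.sum_comp e.symm w]
        simpa using hwsum'
      · intro j _
        rcases h : ee.symm j with i | i
        · simp only [hG, h, Sum.elim_inl]; exact hrange ⟨e.symm i, rfl⟩
        · simp only [hG, h, Sum.elim_inr]; exact hz₀
      · simp only [hF]
        have h3 : ∑ j, (G (ee.symm j)).1 • (G (ee.symm j)).2 = ∑ s, (G s).1 • (G s).2 :=
          Equiv.sum_comp ee.symm fun s => (G s).1 • (G s).2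
        rw [h3, Fintype.sum_sum_type]
        simp only [hG, Sum.elim_inl, Sum.elim_inr, zero_smul, Finset.sum_const_zero, add_zero]
        rw [Equiv.sum_comp e.symm fun i => w i • z i]
        exact hcomb'
    · rintro x ⟨⟨w, zs⟩, ⟨hw, hzs⟩, rfl⟩
      exact (convex_convexHull ℝ Z).sum_mem (fun j _ => hw.1 j) hw.2
        (fun j _ => subset_convexHull ℝ Z (hzs j (Set.mem_univ j)))
  rw [himg]; exact hD.image hFcont

end helpers

theorem convex_envelope_subjet_representation {n : ℕ}
    (Ω : Set (EuclideanSpace ℝ (Fin n))) (hΩopen : IsOpen Ω) (hΩconv : Convex ℝ Ω)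
    (hΩbdd : Bornology.IsBounded Ω)
    (U : EuclideanSpace ℝ (Fin n) → ℝ) (hU : LowerSemicontinuousOn U (closure Ω))
    (x p : EuclideanSpace ℝ (Fin n)) (hx : x ∈ closure Ω)
    (A : Matrix (Fin n) (Fin n) ℝ)
    (hA : MemSubjetWithin (closure Ω) (convexEnvelope (closure Ω) U) x p A) :
    ∃ (q : ℕ), 1 ≤ q ∧ q ≤ n + 1 ∧
      ∃ (xs : Fin q → EuclideanSpace ℝ (Fin n)) (lam : Fin q → ℝ),
        (∀ i, xs i ∈ closure Ω) ∧ (∀ i, lam i ∈ Set.Ioc (0:ℝ) 1) ∧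
        (∑ i, lam i = 1) ∧ (x = ∑ i, lam i • xs i) ∧
        (convexEnvelope (closure Ω) U x = ∑ i, lam i * U (xs i)) ∧
        ∃ (g : EuclideanSpace ℝ (Fin n) →L[ℝ] ℝ) (b : ℝ),
          ∀ y ∈ convexHull ℝ (Set.range xs), convexEnvelope (closure Ω) U y = g y + b := by
  classical
  set K := closure Ω with hKdef
  have hKcl : IsClosed K := isClosed_closure
  have hKcomp : IsCompact K := hΩbdd.isCompact_closure
  have hKconv : Convex ℝ K := hΩconv.closure
  set f := convexEnvelope K U with hfdef
  set S : EuclideanSpace ℝ (Fin n) → Set ℝ := fun y =>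
    {v | ∃ (g : EuclideanSpace ℝ (Fin n) →L[ℝ] ℝ) (b : ℝ),
      (∀ z ∈ K, g z + b ≤ U z) ∧ v = g y + b} with hSdef
  have hfS : ∀ y, f y = sSup (S y) := fun y => rfl
  obtain ⟨y₀, hy₀K, hy₀⟩ := lsc_exists_min hKcomp hKcl ⟨x, hx⟩ hU
  have hSne : ∀ y, (S y).Nonempty := fun y =>
    ⟨(0 : EuclideanSpace ℝ (Fin n) →L[ℝ] ℝ) y + U y₀, 0, U y₀,
      fun z hz => by simpa using hy₀ z hz, by simp⟩
  have hSbdd : ∀ y ∈ K, BddAbove (S y) := fun y hy =>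
    ⟨U y, by rintro v ⟨g, b, hgb, rfl⟩; exact hgb y hy⟩
  have hfleU : ∀ y ∈ K, f y ≤ U y := fun y hy => by
    rw [hfS]; exact csSup_le (hSne y) (by rintro v ⟨g, b, hgb, rfl⟩; exact hgb y hy)
  have hminor : ∀ (g : EuclideanSpace ℝ (Fin n) →L[ℝ] ℝ) (b : ℝ),
      (∀ z ∈ K, g z + b ≤ U z) → ∀ y ∈ K, g y + b ≤ f y := fun g b hgb y hy => by
    rw [hfS]; exact le_csSup (hSbdd y hy) ⟨g, b, hgb, rfl⟩
  -- binary convexity upper bound along the segment from x to z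
  have hconv2 : ∀ z ∈ K, ∀ t : ℝ, 0 ≤ t → t ≤ 1 →
      f (x + t • (z - x)) ≤ (1 - t) * f x + t * f z := by
    intro z hz t ht0 ht1
    rw [hfS]
    refine csSup_le (hSne _) ?_
    rintro v ⟨g, b, hgb, rfl⟩
    have h1 : g (x + t • (z - x)) + b = (1 - t) * (g x + b) + t * (g z + b) := by
      simp only [map_add, map_smul, map_sub, smul_eq_mul]; ring
    rw [h1]
    have hx' := hminor g b hgb x hx
    have hz' := hminor g b hgb z hz
    nlinarith
  -- subgradient inequality
  have hsub : ∀ z ∈ K, f x + (inner ℝ p (z - x) : ℝ) ≤ f z := by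
    intro z hz
    rcases eq_or_ne z x with rfl | hzx
    · simp
    have hev := hA 1 one_pos
    set C : ℝ := (1/2) * quadForm A (z - x) - ‖z - x‖^2 with hC
    set γ : ℝ → EuclideanSpace ℝ (Fin n) := fun t => x + t • (z - x) with hγ
    have hseg : ∀ t : ℝ, 0 ≤ t → t ≤ 1 → γ t ∈ K := by
      intro t h0 h1
      have hmem := hKconv hx hz (by linarith : (0:ℝ) ≤ 1 - t) h0 (by ring)
      have heq : (1 - t) • x + t • z = γ t := by
        simp only [hγ, smul_sub, sub_smul, one_smul]; abel
      rwa [heq] at hmem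
    have htends : Tendsto γ (nhdsWithin 0 (Set.Ioi 0)) (nhdsWithin x K) := by
      apply tendsto_nhdsWithin_of_tendsto_nhds_of_eventually_within
      · have h0 : Tendsto (fun t : ℝ => t • (z - x)) (nhdsWithin 0 (Set.Ioi 0))
            (nhds ((0:ℝ) • (z - x))) :=
          (tendsto_id.mono_right nhdsWithin_le_nhds).smul_const _
        have := h0.const_add x
        simpa [hγ] using this
      · filter_upwards [Ioo_mem_nhdsGT_of_mem
          (⟨le_refl (0:ℝ), one_pos⟩ : (0:ℝ) ∈ Set.Ico (0:ℝ) 1)] with t ht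
        exact hseg t ht.1.le ht.2.le
    have hev2 : ∀ᶠ t in nhdsWithin (0:ℝ) (Set.Ioi 0),
        (inner ℝ p (z - x) : ℝ) + t * C ≤ f z - f x := by
      filter_upwards [htends.eventually hev, Ioo_mem_nhdsGT_of_mem
        (⟨le_refl (0:ℝ), one_pos⟩ : (0:ℝ) ∈ Set.Ico (0:ℝ) 1)] with t ht1 ht2
      have hd : γ t - x = t • (z - x) := by simp [hγ]
      rw [hd, real_inner_smul_right, quadForm_smul, norm_smul, Real.norm_eq_abs, abs_of_pos ht2.1] at ht1
      have hup : f (γ t) ≤ (1 - t) * f x + t * f z := hconv2 z hz t ht2.1.le ht2.2.le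
      have h5 : t * ((inner ℝ p (z - x) : ℝ) + t * C) ≤ t * (f z - f x) := by
        rw [hC]
        nlinarith [ht1, hup]
      exact le_of_mul_le_mul_left h5 ht2.1
    have hlim : Tendsto (fun t : ℝ => (inner ℝ p (z - x) : ℝ) + t * C)
        (nhdsWithin 0 (Set.Ioi 0)) (nhds ((inner ℝ p (z - x) : ℝ) + 0 * C)) :=
      (Tendsto.mul_const C (tendsto_id.mono_right nhdsWithin_le_nhds)).const_add _
    have h6 := le_of_tendsto hlim hev2
    simp only [zero_mul, add_zero] at h6
    linarith
  -- the supporting affine minorant at x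
  set g₀ : EuclideanSpace ℝ (Fin n) →L[ℝ] ℝ := innerSL ℝ p with hg₀
  set b₀ : ℝ := f x - (inner ℝ p x : ℝ) with hb₀
  have hg₀y : ∀ y, g₀ y + b₀ = f x + (inner ℝ p (y - x) : ℝ) := by
    intro y
    simp only [hg₀, hb₀, innerSL_apply_apply, inner_sub_right]
    ring
  have hminor₀ : ∀ z ∈ K, g₀ z + b₀ ≤ U z := fun z hz => by
    rw [hg₀y]; exact (hsub z hz).trans (hfleU z hz)
  have hfx : g₀ x + b₀ = f x := by rw [hg₀y]; simp
  set Z : Set (EuclideanSpace ℝ (Fin n)) := {y | y ∈ K ∧ U y ≤ g₀ y + b₀} with hZ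
  have hZcl : IsClosed Z := lsc_sublevel_closed hKcl hU (g₀.continuous.add continuous_const)
  have hZsub : Z ⊆ K := fun y hy => hy.1
  have hUZ : ∀ y ∈ Z, U y = g₀ y + b₀ := fun y hy => le_antisymm hy.2 (hminor₀ y hy.1)
  have hψ : LowerSemicontinuousOn (fun y => U y + -(g₀ y + b₀)) K :=
    hU.add ((g₀.continuous.add continuous_const).neg.lowerSemicontinuous.lowerSemicontinuousOn K)
  -- the key claim: x lies in the convex hull of the contact set
  have hxZ : x ∈ convexHull ℝ Z := by
    by_contra hnot
    rcases Set.eq_empty_or_nonempty Z with hZe | hZne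
    · obtain ⟨y₁, hy₁K, hy₁⟩ := lsc_exists_min hKcomp hKcl ⟨x, hx⟩ hψ
      have hpos : 0 < U y₁ + -(g₀ y₁ + b₀) := by
        by_contra hle
        push_neg at hle
        have hmem : y₁ ∈ Z := ⟨hy₁K, by linarith⟩
        rw [hZe] at hmem
        exact hmem
      have hm2 : ∀ z ∈ K, g₀ z + (b₀ + (U y₁ + -(g₀ y₁ + b₀))) ≤ U z := by
        intro z hz
        have := hy₁ z hz
        linarith
      have := hminor g₀ _ hm2 x hx
      linarith [hfx]
    · have hZcomp : IsCompact Z := hKcomp.of_isClosed_subset hZcl hZsub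
      have hCH : IsCompact (convexHull ℝ Z) := isCompact_convexHull_euclidean hZcomp
      obtain ⟨ℓ, u, hℓ1, hℓ2⟩ := geometric_hahn_banach_closed_point
        (convex_convexHull ℝ Z) hCH.isClosed hnot
      set K' : Set (EuclideanSpace ℝ (Fin n)) := {y | y ∈ K ∧ u ≤ ℓ y} with hK'
      have hK'cl : IsClosed K' :=
        lsc_sublevel_closed hKcl ((lowerSemicontinuous_const :
          LowerSemicontinuous fun _ : EuclideanSpace ℝ (Fin n) => u).lowerSemicontinuousOn K)
          ℓ.continuous
      have hK'comp : IsCompact K' := hKcomp.of_isClosed_subset hK'cl fun y hy => hy.1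
      have hμ : ∃ μ : ℝ, 0 < μ ∧ ∀ y ∈ K', μ ≤ U y + -(g₀ y + b₀) := by
        rcases Set.eq_empty_or_nonempty K' with hK'e | hK'ne
        · exact ⟨1, one_pos, fun y hy => absurd (hK'e ▸ hy) (Set.notMem_empty y)⟩
        · obtain ⟨y₁, hy₁, hmin⟩ := lsc_exists_min hK'comp hK'cl hK'ne
            (hψ.mono fun y hy => hy.1)
          refine ⟨U y₁ + -(g₀ y₁ + b₀), ?_, fun z hz => hmin z hz⟩
          have hy₁Z : y₁ ∉ Z := fun h =>
            absurd (hℓ1 _ (subset_convexHull ℝ Z h)) (not_lt.2 hy₁.2)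
          have h7 : ¬ (U y₁ ≤ g₀ y₁ + b₀) := fun h => hy₁Z ⟨hy₁.1, h⟩
          push_neg at h7
          linarith
      obtain ⟨μ, hμpos, hμle⟩ := hμ
      obtain ⟨yM, hyM, hM⟩ := hKcomp.exists_isMaxOn ⟨x, hx⟩ ℓ.continuous.continuousOn
      have hMx : ℓ x ≤ ℓ yM := hM hx
      have hMpos : 0 < ℓ yM - u := by linarith
      set δ : ℝ := μ / (ℓ yM - u) with hδ
      have hδpos : 0 < δ := div_pos hμpos hMpos
      have hm3 : ∀ z ∈ K, (g₀ + δ • ℓ) z + (b₀ - δ * u) ≤ U z := by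
        intro z hz
        have hzM : ℓ z ≤ ℓ yM := hM hz
        simp only [ContinuousLinearMap.add_apply, ContinuousLinearMap.coe_smul',
          Pi.smul_apply, smul_eq_mul]
        have hexp : δ * (ℓ z - u) = δ * ℓ z - δ * u := by ring
        rcases le_or_gt (ℓ z) u with h | h
        · have h7 := hminor₀ z hz
          have h7b : δ * (ℓ z - u) ≤ 0 :=
            mul_nonpos_of_nonneg_of_nonpos hδpos.le (by linarith)
          linarith
        · have hz' : z ∈ K' := ⟨hz, h.le⟩
          have h8 := hμle z hz'
          have h9 : δ * (ℓ z - u) ≤ μ := by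
            have h9a : δ * (ℓ z - u) ≤ δ * (ℓ yM - u) :=
              mul_le_mul_of_nonneg_left (by linarith) hδpos.le
            have h9b : δ * (ℓ yM - u) = μ := by
              rw [hδ]; exact div_mul_cancel₀ μ (ne_of_gt hMpos)
            linarith
          linarith
      have h10 := hminor _ _ hm3 x hx
      simp only [ContinuousLinearMap.add_apply, ContinuousLinearMap.coe_smul',
        Pi.smul_apply, smul_eq_mul] at h10
      have hexp2 : δ * (ℓ x - u) = δ * ℓ x - δ * u := by ring
      have hpos2 : 0 < δ * (ℓ x - u) := mul_pos hδpos (sub_pos.2 hℓ2)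
      linarith [hfx]
  -- Carathéodory
  obtain ⟨ι, hι, zz, w, hrange, hindep, hwpos, hwsum, hcomb⟩ :=
    eq_pos_convex_span_of_mem_convexHull hxZ
  letI := hι
  have hwsum' : ∑ i, w i = 1 := hwsum
  have hcomb' : ∑ i, w i • zz i = x := hcomb
  have hq1 : 1 ≤ Fintype.card ι := by
    rcases isEmpty_or_nonempty ι with he | hne
    · rw [Fintype.sum_empty] at hwsum'
      norm_num at hwsum'
    · exact Fintype.card_pos
  have hqn : Fintype.card ι ≤ n + 1 := by
    have h11 := hindep.card_le_finrank_succ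
    have h12 := Submodule.finrank_le (vectorSpan ℝ (Set.range zz))
    rw [finrank_euclideanSpace_fin] at h12
    omega
  set q := Fintype.card ι with hq
  set e : Fin q → ι := ⇑(Fintype.equivFin ι).symm with he
  have hesurj : Function.Surjective e := (Fintype.equivFin ι).symm.surjective
  refine ⟨q, hq1, hqn, fun i => zz (e i), fun i => w (e i), ?_, ?_, ?_, ?_, ?_, ?_⟩
  · exact fun i => hZsub (hrange ⟨e i, rfl⟩)
  · intro i
    refine ⟨hwpos (e i), ?_⟩
    calc w (e i) ≤ ∑ j, w j :=
          Finset.single_le_sum (fun j _ => (hwpos j).le) (Finset.mem_univ (e i))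
      _ = 1 := hwsum'
  · rw [Equiv.sum_comp (Fintype.equivFin ι).symm w]
    exact hwsum'
  · rw [Equiv.sum_comp (Fintype.equivFin ι).symm fun j => w j • zz j]
    exact hcomb'.symm
  · have hUz : ∀ j : ι, U (zz j) = g₀ (zz j) + b₀ := fun j => hUZ _ (hrange ⟨j, rfl⟩)
    have hcalc : ∑ i, w (e i) * U (zz (e i)) = ∑ j, w j * U (zz j) :=
      Equiv.sum_comp (Fintype.equivFin ι).symm fun j => w j * U (zz j)
    have hrepr : ∑ j, w j * U (zz j) = g₀ (∑ j, w j • zz j) + b₀ := by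
      simp only [map_sum, map_smul, smul_eq_mul]
      rw [Finset.sum_congr rfl fun j _ => by rw [hUz j]]
      simp only [mul_add, Finset.sum_add_distrib, ← Finset.sum_mul, hwsum', one_mul]
    show f x = _
    rw [hcalc, hrepr, hcomb', hfx]
  · refine ⟨g₀, b₀, ?_⟩
    intro y hy
    have hrange2 : Set.range (fun i => zz (e i)) = Set.range zz := hesurj.range_comp zz
    rw [hrange2] at hy
    have hyZ : y ∈ convexHull ℝ Z := convexHull_mono hrange hy
    have hyK : y ∈ K := convexHull_min hZsub hKconv hyZ
    have hle1 : g₀ y + b₀ ≤ f y := hminor g₀ b₀ hminor₀ y hyK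
    have hle2 : f y ≤ g₀ y + b₀ := by
      rw [hfS]
      refine csSup_le (hSne y) ?_
      rintro v ⟨g, b, hgb, rfl⟩
      have hlin : IsLinearMap ℝ (fun w₁ : EuclideanSpace ℝ (Fin n) => g w₁ - g₀ w₁) := by
        constructor
        · intro a b'
          simp only [map_add]; ring
        · intro c a
          simp only [map_smul, smul_eq_mul]; ring
      have hH : Convex ℝ {w₁ : EuclideanSpace ℝ (Fin n) | g w₁ - g₀ w₁ ≤ b₀ - b} :=
        convex_halfSpace_le hlin (b₀ - b)
      have hZH : Z ⊆ {w₁ | g w₁ - g₀ w₁ ≤ b₀ - b} := by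
        intro z hz
        have h1 := hgb z (hZsub hz)
        have h2 := hUZ z hz
        simp only [Set.mem_setOf_eq]
        linarith
      have := convexHull_min hZH hH hyZ
      simp only [Set.mem_setOf_eq] at this
      linarith
    exact le_antisymm hle2 hle1
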